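/- arXiv:0908.0840 — 5 statements merged into one kernel-verified Lean document; each statement's English description precedes it below -/
import Mathlib

section
/- Suppose 0 < μ_- < μ_+ and σ_+ > 0, and let h₀ > 0, h₁ = 0. Then min over x ∈ [μ_-, μ_+] of h₀²x²/(2μ_M x - μ_-μ_+ + σ_+²) equals h₀²μ_-²/(μ_-² + σ_+²) if μ_+μ_- - 2σ_+² ≤ μ_-², and equals h₀²(μ_+μ_- - σ_+²)/μ_M² if μ_-² < μ_+μ_- - 2σ_+², where μ_M = (μ_+ + μ_-)/2. -/
theorem stmt_9 (μm μp σp h₀ : ℝ) (h1 : 0 < μm) (h2 : μm < μp) (h3 : 0 < σp) (h4 : 0 < h₀)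
    (μM : ℝ) (hμM : μM = (μp + μm)/2)
    (f : ℝ → ℝ) (hf : ∀ x, f x = h₀^2*x^2/(2*μM*x - μm*μp + σp^2)) :
    (μp*μm - 2*σp^2 ≤ μm^2 → IsLeast (f '' Set.Icc μm μp) (h₀^2*μm^2/(μm^2 + σp^2))) ∧
    (μm^2 < μp*μm - 2*σp^2 → IsLeast (f '' Set.Icc μm μp) (h₀^2*(μp*μm - σp^2)/μM^2)) := by
  subst hμM
  have hDall : ∀ x, μm ≤ x → 0 < 2*((μp + μm)/2)*x - μm*μp + σp^2 := by
    intro x hx; nlinarith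
  constructor
  · intro hc
    constructor
    · refine ⟨μm, ⟨le_refl _, le_of_lt h2⟩, ?_⟩
      rw [hf]
      have : 2*((μp + μm)/2)*μm - μm*μp + σp^2 = μm^2 + σp^2 := by ring
      rw [this]
    · rintro y ⟨x, ⟨hx1, hx2⟩, rfl⟩
      rw [hf]
      have hD := hDall x hx1
      rw [div_le_div_iff₀ (by positivity) hD]
      have hfac : 0 ≤ (x - μm) * ((μm^2+σp^2)*x + μm*σp^2 - μm^2*μp) := by
        apply mul_nonneg (by linarith)
        nlinarith
      nlinarith [mul_nonneg (sq_nonneg h₀) hfac]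
  · intro hc
    have hA : 0 < μp*μm - σp^2 := by nlinarith
    have hM : 0 < (μp + μm)/2 := by linarith
    constructor
    · refine ⟨(μp*μm - σp^2)/((μp + μm)/2), ⟨?_, ?_⟩, ?_⟩
      · rw [le_div_iff₀ hM]; nlinarith
      · rw [div_le_iff₀ hM]; nlinarith
      · rw [hf]
        have hpm : μp + μm ≠ 0 := by nlinarith
        have hx : 2*((μp + μm)/2)*((μp*μm - σp^2)/((μp + μm)/2)) - μm*μp + σp^2
            = μp*μm - σp^2 := by field_simp; ring
        rw [hx, div_pow]
        field_simp [ne_of_gt hA]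
    · rintro y ⟨x, ⟨hx1, hx2⟩, rfl⟩
      rw [hf]
      have hD := hDall x hx1
      rw [div_le_div_iff₀ (by positivity) hD]
      nlinarith [mul_nonneg (sq_nonneg h₀) (sq_nonneg (((μp + μm)/2)*x - (μp*μm - σp^2)))]
end

section
/- Let f₁(π) = (h₀ - πμ₁)² + (h₁ - πσ₁)² and f₂(π) = (h₀ - πμ₂)² + (h₁ - πσ₂)², with μ₁² + σ₁² > 0 and μ₂² + σ₂² > 0. If (h₀μ₁ + h₁σ₁)(h₀μ₂ + h₁σ₂) ≤ 0, then min over π ∈ ℝ of max(f₁(π), f₂(π)) equals h₀² + h₁², attained at π = 0. -/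
theorem stmt_12 (h₀ h₁ μ₁ μ₂ σ₁ σ₂ : ℝ)
    (hp1 : 0 < μ₁^2 + σ₁^2) (hp2 : 0 < μ₂^2 + σ₂^2)
    (hsign : (h₀*μ₁ + h₁*σ₁)*(h₀*μ₂ + h₁*σ₂) ≤ 0)
    (f₁ f₂ : ℝ → ℝ)
    (hf₁ : ∀ π, f₁ π = (h₀ - π*μ₁)^2 + (h₁ - π*σ₁)^2)
    (hf₂ : ∀ π, f₂ π = (h₀ - π*μ₂)^2 + (h₁ - π*σ₂)^2) :
    (∀ π : ℝ, max (f₁ 0) (f₂ 0) ≤ max (f₁ π) (f₂ π)) ∧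
    max (f₁ 0) (f₂ 0) = h₀^2 + h₁^2 := by
  have h0 : max (f₁ 0) (f₂ 0) = h₀^2 + h₁^2 := by
    simp [hf₁, hf₂]
  refine ⟨fun π => ?_, h0⟩
  rw [h0, hf₁, hf₂]
  rcases le_or_gt (π * (h₀*μ₁ + h₁*σ₁)) 0 with h | h
  · exact le_max_of_le_left (by nlinarith [sq_nonneg π])
  · have : π * (h₀*μ₂ + h₁*σ₂) ≤ 0 := by
      by_contra hc
      push_neg at hc
      nlinarith [mul_pos h hc, sq_nonneg π]
    exact le_max_of_le_right (by nlinarith [sq_nonneg π])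
end

section
/- Let f₁, f₂, π₀, π₁, π₂ be as in the two-parabola setting with μ₁² + σ₁² < μ₂² + σ₂². If π₁ ≤ π₀ ≤ π₂ or π₂ ≤ π₀ ≤ π₁, then min over π ∈ ℝ of max(f₁(π), f₂(π)) is attained at π₀, with value h₀² + h₁² - (h₀μ₁ + h₁σ₁)²/(μ₁² + σ₁²) + (μ₁² + σ₁²)(π₀ - π₁)². -/
theorem stmt_14 (h₀ h₁ μ₁ μ₂ σ₁ σ₂ : ℝ)
    (hp1 : 0 < μ₁^2 + σ₁^2) (hlt : μ₁^2 + σ₁^2 < μ₂^2 + σ₂^2)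
    (f₁ f₂ : ℝ → ℝ)
    (hf₁ : ∀ π, f₁ π = (h₀ - π*μ₁)^2 + (h₁ - π*σ₁)^2)
    (hf₂ : ∀ π, f₂ π = (h₀ - π*μ₂)^2 + (h₁ - π*σ₂)^2)
    (π₀ π₁ π₂ : ℝ)
    (hπ₁ : π₁ = (h₀*μ₁ + h₁*σ₁)/(μ₁^2 + σ₁^2))
    (hπ₂ : π₂ = (h₀*μ₂ + h₁*σ₂)/(μ₂^2 + σ₂^2))
    (hπ₀ : π₀ = 2*(h₀*(μ₂ - μ₁) + h₁*(σ₂ - σ₁))/(μ₂^2 - μ₁^2 + σ₂^2 - σ₁^2))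
    (hbetween : (π₁ ≤ π₀ ∧ π₀ ≤ π₂) ∨ (π₂ ≤ π₀ ∧ π₀ ≤ π₁)) :
    (∀ π : ℝ, max (f₁ π₀) (f₂ π₀) ≤ max (f₁ π) (f₂ π)) ∧
    max (f₁ π₀) (f₂ π₀) =
      h₀^2 + h₁^2 - (h₀*μ₁ + h₁*σ₁)^2/(μ₁^2 + σ₁^2) + (μ₁^2 + σ₁^2)*(π₀ - π₁)^2 := by
  have hA2 : 0 < μ₂^2 + σ₂^2 := lt_trans hp1 hlt
  have hdpos : (0:ℝ) < μ₂^2 - μ₁^2 + σ₂^2 - σ₁^2 := by linarith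
  have hπ₀' : π₀ * (μ₂^2 - μ₁^2 + σ₂^2 - σ₁^2) = 2*(h₀*(μ₂ - μ₁) + h₁*(σ₂ - σ₁)) := by
    rw [hπ₀]; field_simp
  have hπ₁' : π₁ * (μ₁^2 + σ₁^2) = h₀*μ₁ + h₁*σ₁ := by
    rw [hπ₁]; field_simp
  have hπ₂' : π₂ * (μ₂^2 + σ₂^2) = h₀*μ₂ + h₁*σ₂ := by
    rw [hπ₂]; field_simp
  have heq : f₁ π₀ = f₂ π₀ := by
    rw [hf₁, hf₂]; linear_combination (-π₀) * hπ₀'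
  have hmax : max (f₁ π₀) (f₂ π₀) = f₁ π₀ := by rw [heq, max_self]
  constructor
  · intro π
    rcases hbetween with ⟨h1, h2⟩ | ⟨h1, h2⟩
    · rcases le_total π π₀ with hle | hle
      · have h2le : f₂ π₀ ≤ f₂ π := by
          rw [hf₂ π, hf₂ π₀]
          nlinarith [hπ₂', mul_nonneg (mul_nonneg hA2.le (sub_nonneg.2 hle))
            (by linarith : (0:ℝ) ≤ 2*π₂ - π - π₀)]
        calc max (f₁ π₀) (f₂ π₀) = f₂ π₀ := by rw [heq, max_self]
          _ ≤ f₂ π := h2le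
          _ ≤ max (f₁ π) (f₂ π) := le_max_right _ _
      · have h1le : f₁ π₀ ≤ f₁ π := by
          rw [hf₁ π, hf₁ π₀]
          nlinarith [hπ₁', mul_nonneg (mul_nonneg hp1.le (sub_nonneg.2 hle))
            (by linarith : (0:ℝ) ≤ π + π₀ - 2*π₁)]
        calc max (f₁ π₀) (f₂ π₀) = f₁ π₀ := hmax
          _ ≤ f₁ π := h1le
          _ ≤ max (f₁ π) (f₂ π) := le_max_left _ _
    · rcases le_total π π₀ with hle | hle
      · have h1le : f₁ π₀ ≤ f₁ π := by
          rw [hf₁ π, hf₁ π₀]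
          nlinarith [hπ₁', mul_nonneg (mul_nonneg hp1.le (sub_nonneg.2 hle))
            (by linarith : (0:ℝ) ≤ 2*π₁ - π - π₀)]
        calc max (f₁ π₀) (f₂ π₀) = f₁ π₀ := hmax
          _ ≤ f₁ π := h1le
          _ ≤ max (f₁ π) (f₂ π) := le_max_left _ _
      · have h2le : f₂ π₀ ≤ f₂ π := by
          rw [hf₂ π, hf₂ π₀]
          nlinarith [hπ₂', mul_nonneg (mul_nonneg hA2.le (sub_nonneg.2 hle))
            (by linarith : (0:ℝ) ≤ π + π₀ - 2*π₂)]
        calc max (f₁ π₀) (f₂ π₀) = f₂ π₀ := by rw [heq, max_self]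
          _ ≤ f₂ π := h2le
          _ ≤ max (f₁ π) (f₂ π) := le_max_right _ _
  · rw [hmax, hf₁]
    have hrw : (h₀*μ₁ + h₁*σ₁)^2/(μ₁^2 + σ₁^2) = π₁^2*(μ₁^2 + σ₁^2) := by
      rw [← hπ₁']; field_simp
    rw [hrw]
    linear_combination (2*π₀) * hπ₁'
end

section
/- Suppose there exists (x̄, ȳ) ∈ D = [μ_-, μ_+] × [σ_-, σ_+] with h₀x̄ + h₁ȳ = 0 and x̄² + ȳ² > 0. Then min over π ∈ ℝ of max over (μ,σ) ∈ D of ((h₀ - πμ)² + (h₁ - πσ)²) equals h₀² + h₁², and the minimum is attained at π* = 0. -/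
theorem stmt_17 (h₀ h₁ μm μp σm σp : ℝ) (hμ : μm ≤ μp) (hσ : σm ≤ σp)
    (xb yb : ℝ) (hmem : (xb, yb) ∈ Set.Icc μm μp ×ˢ Set.Icc σm σp)
    (hline : h₀*xb + h₁*yb = 0) (hpos : 0 < xb^2 + yb^2)
    (G : ℝ → ℝ)
    (hG : ∀ π, G π = sSup ((fun p : ℝ × ℝ => (h₀ - π*p.1)^2 + (h₁ - π*p.2)^2) ''
      (Set.Icc μm μp ×ˢ Set.Icc σm σp))) :
    (∀ π : ℝ, G 0 ≤ G π) ∧ G 0 = h₀^2 + h₁^2 := by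
  have hne : (Set.Icc μm μp ×ˢ Set.Icc σm σp).Nonempty := ⟨_, hmem⟩
  have hG0 : G 0 = h₀^2 + h₁^2 := by
    rw [hG 0]
    have himg : (fun p : ℝ × ℝ => (h₀ - 0*p.1)^2 + (h₁ - 0*p.2)^2) ''
        (Set.Icc μm μp ×ˢ Set.Icc σm σp) = {h₀^2 + h₁^2} := by
      have := hne.image_const (h₀^2 + h₁^2)
      rw [← this]
      apply Set.image_congr
      intro p _; ring
    rw [himg, csSup_singleton]
  refine ⟨fun π => ?_, hG0⟩
  rw [hG0, hG π]
  have hcomp : IsCompact ((fun p : ℝ × ℝ => (h₀ - π*p.1)^2 + (h₁ - π*p.2)^2) ''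
      (Set.Icc μm μp ×ˢ Set.Icc σm σp)) :=
    (isCompact_Icc.prod isCompact_Icc).image (by fun_prop)
  have hle : h₀^2 + h₁^2 ≤ (h₀ - π*xb)^2 + (h₁ - π*yb)^2 := by
    have h2 : π * (h₀*xb + h₁*yb) = 0 := by rw [hline]; ring
    nlinarith [mul_nonneg (sq_nonneg π) hpos.le, h2]
  exact hle.trans (le_csSup hcomp.bddAbove ⟨(xb, yb), hmem, rfl⟩)
end

section
/- Suppose 0 < μ_- < μ_+, σ_+ > 0, h₁ = 0, h₀ > 0, and μ_-² < μ_+μ_- - 2σ_+². Then with ν* the two-point measure on {(μ_-, σ_+), (μ_+, σ_+)} assigning mass t to (μ_+, σ_+) where t = (μ_-μ_+ - μ_-² - 2σ_+²)/(μ_+² - μ_-²), the optimal hedge is π* = h₀/μ_M with μ_M = (μ_+ + μ_-)/2; i.e., (∫ h₀μ dν*)/(∫ (μ² + σ²) dν*) = h₀/μ_M. -/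
open MeasureTheory

lemma twopoint_integral {f : ℝ × ℝ → ℝ} (hf : Continuous f) (a b : ℝ × ℝ) (s u : ℝ)
    (hs : 0 ≤ s) (hu : 0 ≤ u) :
    (∫ p, f p ∂(ENNReal.ofReal s • Measure.dirac a + ENNReal.ofReal u • Measure.dirac b))
      = s * f a + u * f b := by
  have key : ∀ x : ℝ × ℝ, Integrable f (Measure.dirac x) := by
    intro x
    have hae : f =ᵐ[Measure.dirac x] fun _ => f x := by
      rw [Filter.EventuallyEq, MeasureTheory.ae_dirac_eq]
      exact Filter.eventually_pure.2 rfl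
    exact (integrable_const (f x)).congr hae.symm
  have hia : Integrable f (ENNReal.ofReal s • Measure.dirac a) :=
    (key a).smul_measure ENNReal.ofReal_ne_top
  have hib : Integrable f (ENNReal.ofReal u • Measure.dirac b) :=
    (key b).smul_measure ENNReal.ofReal_ne_top
  rw [integral_add_measure hia hib, integral_smul_measure, integral_smul_measure,
    integral_dirac, integral_dirac, ENNReal.toReal_ofReal hs, ENNReal.toReal_ofReal hu,
    smul_eq_mul, smul_eq_mul]

theorem stmt_18 (μm μp σp h₀ : ℝ) (h1 : 0 < μm) (h2 : μm < μp) (h3 : 0 < σp)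
    (h4 : 0 < h₀) (h5 : μm^2 < μp*μm - 2*σp^2)
    (t : ℝ) (ht : t = (μm*μp - μm^2 - 2*σp^2)/(μp^2 - μm^2))
    (ν : Measure (ℝ × ℝ))
    (hν : ν = ENNReal.ofReal (1 - t) • Measure.dirac (μm, σp)
             + ENNReal.ofReal t • Measure.dirac (μp, σp))
    (μM : ℝ) (hμM : μM = (μp + μm)/2) :
    (∫ p, h₀*p.1 ∂ν) / (∫ p, (p.1^2 + p.2^2) ∂ν) = h₀/μM := by
  have hd : 0 < μp^2 - μm^2 := by nlinarith
  have htpos : 0 ≤ t := by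
    rw [ht]; apply div_nonneg _ hd.le; nlinarith
  have ht1 : 0 ≤ 1 - t := by
    rw [ht]
    rw [sub_nonneg, div_le_one hd]
    nlinarith
  have c1 : Continuous (fun p : ℝ × ℝ => h₀ * p.1) := by continuity
  have c2 : Continuous (fun p : ℝ × ℝ => p.1^2 + p.2^2) := by continuity
  rw [hν, twopoint_integral c1 _ _ _ _ ht1 htpos, twopoint_integral c2 _ _ _ _ ht1 htpos]
  have htv : t * (μp^2 - μm^2) = μm*μp - μm^2 - 2*σp^2 := by
    rw [ht]; field_simp
  have hden : (1-t) * (μm^2 + σp^2) + t * (μp^2 + σp^2) = μm*μp - σp^2 := by nlinarith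
  have hnum : (1-t) * (h₀ * μm) + t * (h₀ * μp) = h₀ * (μm + t*(μp - μm)) := by ring
  have hμ : 0 < μM := by rw [hμM]; linarith
  have hds : (0:ℝ) < μm*μp - σp^2 := by nlinarith
  rw [hden, div_eq_div_iff (by linarith : (0:ℝ) < μm*μp - σp^2).ne' hμ.ne']
  rw [hμM, ht]
  field_simp
  ring
end
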